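/- In a unit disk graph (vertices are points in the plane, two vertices adjacent iff their Euclidean distance is at most 1), any vertex is adjacent to at most 5 vertices of any independent set. -/

import Mathlib

open scoped Classical

noncomputable def UDG.toC (x : EuclideanSpace ℝ (Fin 2)) : ℂ := ⟨x 0, x 1⟩

lemma UDG.dist_toC (x y : EuclideanSpace ℝ (Fin 2)) :
    dist (UDG.toC x) (UDG.toC y) = dist x y := by
  rw [Complex.dist_eq, EuclideanSpace.dist_eq, Complex.norm_def, Complex.normSq_apply]
  simp [UDG.toC, Fin.sum_univ_two, Real.dist_eq, sq_abs]
  ring_nf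

lemma UDG.cos_lt_half_of {z w : ℂ} (hz1 : ‖z‖ ≤ 1) (hw1 : ‖w‖ ≤ 1)
    (h : 1 < ‖z - w‖) : Real.cos (z.arg - w.arg) < 1/2 := by
  by_contra hc
  push_neg at hc
  have key : ‖z - w‖ ^ 2 = ‖z‖ ^ 2 + ‖w‖ ^ 2
      - 2 * ‖z‖ * ‖w‖ * Real.cos (z.arg - w.arg) := by
    have h1 := Complex.norm_mul_cos_arg z
    have h2 := Complex.norm_mul_sin_arg z
    have h3 := Complex.norm_mul_cos_arg w
    have h4 := Complex.norm_mul_sin_arg w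
    rw [Real.cos_sub, Complex.sq_norm, Complex.sq_norm, Complex.sq_norm,
      Complex.normSq_apply, Complex.normSq_apply, Complex.normSq_apply,
      Complex.sub_re, Complex.sub_im]
    linear_combination (2 * ‖w‖ * Real.cos w.arg) * h1 + (2 * z.re) * h3
      + (2 * ‖w‖ * Real.sin w.arg) * h2 + (2 * z.im) * h4
  have ha := norm_nonneg z
  have hb := norm_nonneg w
  nlinarith [mul_nonneg ha hb, sq_nonneg (‖z‖ - ‖w‖)]

open Real in
lemma UDG.angle_bounds {θ : ℝ} (h0 : 0 ≤ θ) (h2 : θ ≤ 2*π) (hc : Real.cos θ < 1/2) :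
    π/3 < θ ∧ θ < 5*π/3 := by
  have hπ := Real.pi_pos
  constructor
  · by_contra hle
    push_neg at hle
    have : Real.cos (π/3) ≤ Real.cos θ :=
      Real.cos_le_cos_of_nonneg_of_le_pi h0 (by linarith) hle
    rw [Real.cos_pi_div_three] at this
    linarith
  · by_contra hge
    push_neg at hge
    have heq : Real.cos θ = Real.cos (2*π - θ) := by
      rw [Real.cos_sub, Real.cos_two_pi, Real.sin_two_pi]; ring
    have : Real.cos (π/3) ≤ Real.cos (2*π - θ) :=
      Real.cos_le_cos_of_nonneg_of_le_pi (by linarith) (by linarith) (by linarith)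
    rw [Real.cos_pi_div_three] at this
    linarith [heq ▸ hc]

lemma UDG.abs_sub_lt_one_of_floor_eq {a b : ℝ} (h : ⌊a⌋ = ⌊b⌋) : |a - b| < 1 := by
  have h1 := Int.floor_le a
  have h2 := Int.lt_floor_add_one a
  have h3 := Int.floor_le b
  have h4 := Int.lt_floor_add_one b
  rw [h] at h1 h2
  rw [abs_lt]
  constructor <;> linarith

open Real in
/-- In a unit disk graph (vertices are points in the plane, adjacent iff
Euclidean distance ≤ 1), any vertex is adjacent to at most 5 vertices of any
independent set. -/
theorem udg_vertex_adj_at_most_five_of_independent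
    (V I : Finset (EuclideanSpace ℝ (Fin 2))) (hIV : I ⊆ V)
    (hind : ∀ x ∈ I, ∀ y ∈ I, x ≠ y → 1 < dist x y)
    (u : EuclideanSpace ℝ (Fin 2)) (hu : u ∈ V) :
    (I.filter (fun v => v ≠ u ∧ dist u v ≤ 1)).card ≤ 5 := by
  set S := I.filter (fun v => v ≠ u ∧ dist u v ≤ 1) with hS
  by_contra hcon
  push_neg at hcon
  have hπ := Real.pi_pos
  set z : EuclideanSpace ℝ (Fin 2) → ℂ := fun v => UDG.toC v - UDG.toC u with hz
  have habs : ∀ v ∈ S, ‖z v‖ ≤ 1 := by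
    intro v hv
    have h1 : dist v u ≤ 1 := by
      have := (Finset.mem_filter.mp hv).2.2
      rwa [dist_comm] at this
    calc ‖z v‖ = dist (UDG.toC v) (UDG.toC u) := (Complex.dist_eq _ _).symm
      _ = dist v u := UDG.dist_toC v u
      _ ≤ 1 := h1
  have hcos : ∀ v ∈ S, ∀ w ∈ S, v ≠ w →
      Real.cos ((z v).arg - (z w).arg) < 1/2 := by
    intro v hv w hw hvw
    have h1 : 1 < dist v w := hind v (Finset.mem_filter.mp hv).1 w (Finset.mem_filter.mp hw).1 hvw
    have h2 : ‖z v - z w‖ = dist v w := by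
      rw [hz]; simp only [sub_sub_sub_cancel_right]
      rw [← Complex.dist_eq, UDG.dist_toC]
    exact UDG.cos_lt_half_of (habs v hv) (habs w hw) (by rw [h2]; exact h1)
  obtain ⟨v0, hv0⟩ : ∃ v0, v0 ∈ S := Finset.card_pos.mp (by omega) |>.imp fun _ h => h
  set T := S.erase v0 with hT
  have hTcard : 5 ≤ T.card := by
    rw [hT, Finset.card_erase_of_mem hv0]; omega
  set δ : EuclideanSpace ℝ (Fin 2) → ℝ := fun v =>
    if (z v).arg - (z v0).arg < 0 then (z v).arg - (z v0).arg + 2*π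
    else (z v).arg - (z v0).arg with hδ
  have hargb : ∀ v : EuclideanSpace ℝ (Fin 2), -π < (z v).arg ∧ (z v).arg ≤ π :=
    fun v => ⟨Complex.neg_pi_lt_arg _, Complex.arg_le_pi _⟩
  have hδb : ∀ v, 0 ≤ δ v ∧ δ v ≤ 2*π := by
    intro v
    obtain ⟨a1, a2⟩ := hargb v
    obtain ⟨b1, b2⟩ := hargb v0
    rw [hδ]; dsimp only
    split <;> constructor <;> linarith
  have hδcos : ∀ v, Real.cos (δ v) = Real.cos ((z v).arg - (z v0).arg) := by
    intro v
    rw [hδ]; dsimp only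
    split
    · rw [Real.cos_add_two_pi]
    · rfl
  have hδrange : ∀ v ∈ T, π/3 < δ v ∧ δ v < 5*π/3 := by
    intro v hv
    have hne : v ≠ v0 := Finset.ne_of_mem_erase hv
    have hvS : v ∈ S := Finset.mem_of_mem_erase hv
    have := hcos v hvS v0 hv0 hne
    rw [← hδcos v] at this
    exact UDG.angle_bounds (hδb v).1 (hδb v).2 this
  have hδsep : ∀ v ∈ T, ∀ w ∈ T, v ≠ w → π/3 < |δ v - δ w| := by
    intro v hv w hw hvw
    have hvS : v ∈ S := Finset.mem_of_mem_erase hv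
    have hwS : w ∈ S := Finset.mem_of_mem_erase hw
    have hc := hcos v hvS w hwS hvw
    have hcd : Real.cos (δ v - δ w) = Real.cos ((z v).arg - (z w).arg) := by
      rw [hδ]; dsimp only
      split <;> split
      · rw [show (z v).arg - (z v0).arg + 2*π - ((z w).arg - (z v0).arg + 2*π)
          = (z v).arg - (z w).arg by ring]
      · rw [show (z v).arg - (z v0).arg + 2*π - ((z w).arg - (z v0).arg)
          = ((z v).arg - (z w).arg) + 2*π by ring, Real.cos_add_two_pi]
      · rw [show (z v).arg - (z v0).arg - ((z w).arg - (z v0).arg + 2*π)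
          = ((z v).arg - (z w).arg) - 2*π by ring, Real.cos_sub_two_pi]
      · rw [show (z v).arg - (z v0).arg - ((z w).arg - (z v0).arg)
          = (z v).arg - (z w).arg by ring]
    obtain ⟨hv1, hv2⟩ := hδrange v hv
    obtain ⟨hw1, hw2⟩ := hδrange w hw
    have habs2 : |δ v - δ w| ≤ 2*π := by
      rw [abs_le]; constructor <;> linarith
    have hc2 : Real.cos |δ v - δ w| < 1/2 := by
      rw [Real.cos_abs, hcd]; exact hc
    exact (UDG.angle_bounds (abs_nonneg _) habs2 hc2).1
  -- pigeonhole
  have hmaps : ∀ v ∈ T, (⌊(δ v - π/3)/(π/3)⌋ : ℤ) ∈ Finset.Icc (0:ℤ) 3 := by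
    intro v hv
    obtain ⟨h1, h2⟩ := hδrange v hv
    have hq0 : 0 ≤ (δ v - π/3)/(π/3) := div_nonneg (by linarith) (by linarith)
    have hq4 : (δ v - π/3)/(π/3) < 4 := by
      rw [div_lt_iff₀ (by linarith)]; linarith
    rw [Finset.mem_Icc]
    constructor
    · exact Int.floor_nonneg.mpr hq0
    · have : ⌊(δ v - π/3)/(π/3)⌋ < 4 := Int.floor_lt.mpr (by exact_mod_cast hq4)
      omega
  have hcard4 : (Finset.Icc (0:ℤ) 3).card < T.card := by
    rw [Int.card_Icc]; simp; omega
  obtain ⟨v, hv, w, hw, hvw, heq⟩ :=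
    Finset.exists_ne_map_eq_of_card_lt_of_maps_to hcard4 hmaps
  have hlt := UDG.abs_sub_lt_one_of_floor_eq heq
  have hdiff : (δ v - π/3)/(π/3) - (δ w - π/3)/(π/3) = (δ v - δ w)/(π/3) := by
    field_simp; ring
  rw [hdiff, abs_div, abs_of_pos (by linarith : (0:ℝ) < π/3), div_lt_one (by linarith)] at hlt
  have := hδsep v hv w hw hvw
  linarith
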